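/- For every infinite group G there exists a 2-thin subset X ⊆ G such that G = XX⁻¹ ∪ X⁻¹X (where XX⁻¹ = {xy⁻¹ : x, y ∈ X} and X⁻¹X = {x⁻¹y : x, y ∈ X}). -/

import Mathlib

open scoped Pointwise

/-- `X` is `k`-thin if `|gX ∩ X| ≤ k` for each `g ∈ G \ {e}`. -/
def IsThin {G : Type*} [Group G] (k : ℕ) (X : Set G) : Prop :=
  ∀ g : G, g ≠ 1 → ((g • X) ∩ X).Finite ∧ ((g • X) ∩ X).ncard ≤ k

namespace TwoThin

variable {G : Type*} [Group G]

/-- The set of "bad" choices for the new point at a stage handling `g` with current set `Y`. -/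
def BadSet (g : G) (Y : Set G) : Set G :=
  Y ∪ g • Y ∪ g⁻¹ • Y ∪ (g * g)⁻¹ • Y ∪ Y * Y⁻¹ * Y ∪ g⁻¹ • (Y * Y⁻¹ * Y)

/-- `x` is a good choice at a stage handling `g` with current set `Y`. -/
def GoodPt (g : G) (Y : Set G) (x : G) : Prop :=
  x ∉ BadSet g Y ∧ x⁻¹ * g * x ∉ Y⁻¹ * Y

/-- condition for adding a pair at this stage -/
def Active (g : G) (Y : Set G) : Prop :=
  g ≠ 1 ∧ g ∉ Y * Y⁻¹ ∪ Y⁻¹ * Y ∧ ∃ x, GoodPt g Y x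

open Classical in
noncomputable def stepSet (g : G) (Y : Set G) : Set G :=
  if h : Active g Y then {h.2.2.choose, g * h.2.2.choose} else ∅

lemma stepSet_cases (g : G) (Y : Set G) :
    stepSet g Y = ∅ ∨ ∃ x, GoodPt g Y x ∧ g ≠ 1 ∧ g ∉ Y * Y⁻¹ ∪ Y⁻¹ * Y ∧
      stepSet g Y = {x, g * x} := by
  unfold stepSet
  classical
  split
  · next h => exact Or.inr ⟨h.2.2.choose, h.2.2.choose_spec, h.1, h.2.1, rfl⟩
  · exact Or.inl rfl

lemma stepSet_of_active {g : G} {Y : Set G} (h : Active g Y) :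
    ∃ x, GoodPt g Y x ∧ stepSet g Y = {x, g * x} := by
  unfold stepSet
  rw [dif_pos h]
  exact ⟨h.2.2.choose, h.2.2.choose_spec, rfl⟩

set_option linter.unusedSectionVars false

section Core
variable {g x : G} {Y : Set G}

lemma badset_mem₁ {g : G} {Y : Set G} (h : x ∈ Y) : x ∈ BadSet g Y := by
  simp [BadSet, h]

lemma badset_mem₂ (h : g⁻¹ * x ∈ Y) : x ∈ BadSet g Y := by
  simp only [BadSet, Set.mem_union]
  exact Or.inl <| Or.inl <| Or.inl <| Or.inl <| Or.inr <|
    (Set.mem_smul_set_iff_inv_smul_mem).2 (by simpa [smul_eq_mul] using h)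

lemma badset_mem₃ (h : g * x ∈ Y) : x ∈ BadSet g Y := by
  simp only [BadSet, Set.mem_union]
  exact Or.inl <| Or.inl <| Or.inl <| Or.inr <|
    (Set.mem_smul_set_iff_inv_smul_mem).2 (by simpa [smul_eq_mul] using h)

lemma badset_mem₄ (h : g * (g * x) ∈ Y) : x ∈ BadSet g Y := by
  simp only [BadSet, Set.mem_union]
  exact Or.inl <| Or.inl <| Or.inr <|
    (Set.mem_smul_set_iff_inv_smul_mem).2 (by simpa [smul_eq_mul, mul_assoc] using h)

lemma badset_mem₅ (h : x ∈ Y * Y⁻¹ * Y) : x ∈ BadSet g Y := by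
  simp only [BadSet, Set.mem_union]; exact Or.inl (Or.inr h)

lemma badset_mem₆ (h : g * x ∈ Y * Y⁻¹ * Y) : x ∈ BadSet g Y := by
  simp only [BadSet, Set.mem_union]
  exact Or.inr <|
    (Set.mem_smul_set_iff_inv_smul_mem).2 (by simpa [smul_eq_mul] using h)

variable (hx : GoodPt g Y x)
include hx

lemma notY : x ∉ Y := fun h => hx.1 (badset_mem₁ h)
lemma notY₂ : g⁻¹ * x ∉ Y := fun h => hx.1 (badset_mem₂ h)
lemma notY₃ : g * x ∉ Y := fun h => hx.1 (badset_mem₃ h)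
lemma notY₄ : g * (g * x) ∉ Y := fun h => hx.1 (badset_mem₄ h)

lemma freshC {v : G} (hv : v ∈ Y) : x * v⁻¹ ∉ Y * Y⁻¹ := by
  rintro ⟨a, ha, b, hb, hab⟩
  replace hab : a * b = x * v⁻¹ := hab
  refine hx.1 (badset_mem₅ ?_)
  have hxa : x = a * b * v := by rw [hab, inv_mul_cancel_right]
  rw [hxa]
  exact Set.mul_mem_mul (Set.mul_mem_mul ha hb) hv

lemma freshD {u : G} (hu : u ∈ Y) : u * x⁻¹ ∉ Y * Y⁻¹ := by
  rintro ⟨a, ha, b, hb, hab⟩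
  replace hab : a * b = u * x⁻¹ := hab
  refine hx.1 (badset_mem₅ ?_)
  have hxa : x = b⁻¹ * a⁻¹ * u := by
    have : a * b * x = u := by rw [hab, inv_mul_cancel_right]
    rw [← this]; group
  rw [hxa]
  exact Set.mul_mem_mul (Set.mul_mem_mul (Set.mem_inv.1 hb) (Set.inv_mem_inv.2 ha)) hu

lemma freshE {v : G} (hv : v ∈ Y) : (g * x) * v⁻¹ ∉ Y * Y⁻¹ := by
  rintro ⟨a, ha, b, hb, hab⟩
  replace hab : a * b = (g * x) * v⁻¹ := hab
  refine hx.1 (badset_mem₆ ?_)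
  have hxa : g * x = a * b * v := by rw [hab, inv_mul_cancel_right]
  rw [hxa]
  exact Set.mul_mem_mul (Set.mul_mem_mul ha hb) hv

lemma freshF {u : G} (hu : u ∈ Y) : u * (g * x)⁻¹ ∉ Y * Y⁻¹ := by
  rintro ⟨a, ha, b, hb, hab⟩
  replace hab : a * b = u * (g * x)⁻¹ := hab
  refine hx.1 (badset_mem₆ ?_)
  have hxa : g * x = b⁻¹ * a⁻¹ * u := by
    have : a * b * (g * x) = u := by rw [hab, inv_mul_cancel_right]
    rw [← this]; group
  rw [hxa]
  exact Set.mul_mem_mul (Set.mul_mem_mul (Set.mem_inv.1 hb) (Set.inv_mem_inv.2 ha)) hu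

lemma noconj {y₁ y₂ : G} (h₁ : y₁ ∈ Y) (h₂ : y₂ ∈ Y) :
    y₁⁻¹ * y₂ ≠ x⁻¹ * g * x := fun h =>
  hx.2 (h ▸ Set.mul_mem_mul (Set.inv_mem_inv.2 h₁) h₂)

end Core

section Cov
variable {g : G} {Y : Set G} (hcov : g ∉ Y * Y⁻¹ ∪ Y⁻¹ * Y)
include hcov

lemma g_not_mem : g ∉ Y * Y⁻¹ := fun h => hcov (Or.inl h)

lemma ginv_not_mem : g⁻¹ ∉ Y * Y⁻¹ := by
  rintro ⟨a, ha, b, hb, hab⟩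
  replace hab : a * b = g⁻¹ := hab
  refine hcov (Or.inl ?_)
  have : g = b⁻¹ * a⁻¹ := by rw [← inv_inv g, ← hab]; group
  rw [this]
  exact Set.mul_mem_mul (Set.mem_inv.1 hb) (Set.inv_mem_inv.2 ha)

end Cov


section Stage
variable {g x : G} {Y : Set G}

lemma mem_pair_iff {u : G} : u ∈ ({x, g * x} : Set G) ↔ u = x ∨ u = g * x := by
  simp [Set.mem_insert_iff]

variable (hg : g ≠ 1) (hcov : g ∉ Y * Y⁻¹ ∪ Y⁻¹ * Y) (hx : GoodPt g Y x)
include hg hcov hx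

/-- Any quotient involving a new element is not an old quotient. -/
lemma fresh {u v : G} (hu : u ∈ Y ∪ {x, g * x}) (hv : v ∈ Y ∪ {x, g * x})
    (hP : u ∈ ({x, g * x} : Set G) ∨ v ∈ ({x, g * x} : Set G)) (huv : u ≠ v) :
    u * v⁻¹ ∉ Y * Y⁻¹ := by
  have hginv : g⁻¹ ∉ Y * Y⁻¹ := ginv_not_mem hcov
  have hgmem : g ∉ Y * Y⁻¹ := g_not_mem hcov
  rcases hP with hP | hP
  · rcases mem_pair_iff.1 hP with h | h
    · -- u = x
      rcases hv with hv | hv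
      · rw [h]; exact freshC hx hv
      · rcases mem_pair_iff.1 hv with h' | h'
        · exact absurd (h.trans h'.symm) huv
        · rw [h, h']
          have : x * (g * x)⁻¹ = g⁻¹ := by group
          rw [this]; exact hginv
    · -- u = g * x
      rcases hv with hv | hv
      · rw [h]; exact freshE hx hv
      · rcases mem_pair_iff.1 hv with h' | h'
        · rw [h, h']
          have : (g * x) * x⁻¹ = g := by group
          rw [this]; exact hgmem
        · exact absurd (h.trans h'.symm) huv
  · rcases mem_pair_iff.1 hP with h | h
    · -- v = x
      rcases hu with hu | hu
      · rw [h]; exact freshD hx hu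
      · rcases mem_pair_iff.1 hu with h' | h'
        · exact absurd (h'.trans h.symm) huv
        · rw [h, h']
          have : (g * x) * x⁻¹ = g := by group
          rw [this]; exact hgmem
    · -- v = g * x
      rcases hu with hu | hu
      · rw [h]; exact freshF hx hu
      · rcases mem_pair_iff.1 hu with h' | h'
        · rw [h, h']
          have : x * (g * x)⁻¹ = g⁻¹ := by group
          rw [this]; exact hginv
        · exact absurd (h'.trans h.symm) huv

end Stage

section Reps
variable {g x : G} {Y : Set G}
  (hg : g ≠ 1) (hcov : g ∉ Y * Y⁻¹ ∪ Y⁻¹ * Y) (hx : GoodPt g Y x)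
include hg hcov hx

set_option maxHeartbeats 1000000 in
/-- At a given stage, each value `h ≠ 1` has at most two representations
involving a new element. -/
lemma stage_reps (h : G) (hh : h ≠ 1) :
    ∃ p q : G × G, ∀ u v, u ∈ Y ∪ {x, g * x} → v ∈ Y ∪ {x, g * x} →
      (u ∈ ({x, g * x} : Set G) ∨ v ∈ ({x, g * x} : Set G)) → u * v⁻¹ = h →
      (u, v) = p ∨ (u, v) = q := by
  classical
  by_cases hA : h = g
  · subst hA
    refine ⟨(h * x, x), (x, h * x), ?_⟩
    rintro u v hu hv hP huv
    have hveq : v = h⁻¹ * u := by rw [← huv]; group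
    have hueq : u = h * v := by rw [← huv]; group
    rcases hP with hP | hP
    · rcases mem_pair_iff.1 hP with h1 | h1
      · -- u = x, v = h⁻¹x
        have hv2 : v = h⁻¹ * x := by rw [hveq, h1]
        rcases hv with hv | hv
        · exact absurd (hv2 ▸ hv) (notY₂ hx)
        · rcases mem_pair_iff.1 hv with h2 | h2
          · exfalso; apply hh
            have : h⁻¹ * x = 1 * x := by rw [← hv2, h2, one_mul]
            have := mul_right_cancel this
            simpa using this
          · right; rw [Prod.mk.injEq]; exact ⟨h1, h2⟩
      · -- u = h x, v = x
        have hv2 : v = x := by rw [hveq, h1]; group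
        left; rw [Prod.mk.injEq]; exact ⟨h1, hv2⟩
    · rcases mem_pair_iff.1 hP with h1 | h1
      · -- v = x, u = h x
        have hu2 : u = h * x := by rw [hueq, h1]
        left; rw [Prod.mk.injEq]; exact ⟨hu2, h1⟩
      · -- v = h x, u = h (h x)
        have hu2 : u = h * (h * x) := by rw [hueq, h1]
        rcases hu with hu | hu
        · exact absurd (hu2 ▸ hu) (notY₄ hx)
        · rcases mem_pair_iff.1 hu with h2 | h2
          · right; rw [Prod.mk.injEq]; exact ⟨h2, h1⟩
          · exfalso; apply hg
            have : h * (h * x) = h * (1 * x) := by rw [← hu2, h2, one_mul]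
            have := mul_left_cancel this
            have : h * x = 1 * x := by rw [this, one_mul]
            simpa using mul_right_cancel this
  · by_cases hB : h = g⁻¹
    · subst hB
      refine ⟨(x, g * x), (x, g * x), ?_⟩
      rintro u v hu hv hP huv
      have hveq : v = g * u := by rw [← inv_inv g, ← huv]; group
      have hueq : u = g⁻¹ * v := by rw [← huv]; group
      have hgg : g * g ≠ 1 := fun hc => hA (by rw [inv_eq_of_mul_eq_one_right hc])
      rcases hP with hP | hP
      · rcases mem_pair_iff.1 hP with h1 | h1
        · -- u = x, v = g x
          have hv2 : v = g * x := by rw [hveq, h1]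
          left; rw [Prod.mk.injEq]; exact ⟨h1, hv2⟩
        · -- u = g x, v = g (g x)
          have hv2 : v = g * (g * x) := by rw [hveq, h1]
          rcases hv with hv | hv
          · exact absurd (hv2 ▸ hv) (notY₄ hx)
          · rcases mem_pair_iff.1 hv with h2 | h2
            · exfalso; apply hgg
              have : g * g * x = 1 * x := by rw [mul_assoc, ← hv2, h2, one_mul]
              exact mul_right_cancel this
            · exfalso; apply hg
              have : g * (g * x) = 1 * (g * x) := by rw [← hv2, h2, one_mul]
              simpa using mul_right_cancel this
      · rcases mem_pair_iff.1 hP with h1 | h1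
        · -- v = x, u = g⁻¹ x
          have hu2 : u = g⁻¹ * x := by rw [hueq, h1]
          rcases hu with hu | hu
          · exact absurd (hu2 ▸ hu) (notY₂ hx)
          · rcases mem_pair_iff.1 hu with h2 | h2
            · exfalso; apply hg
              have : g⁻¹ * x = 1 * x := by rw [← hu2, h2, one_mul]
              have := mul_right_cancel this
              simpa using this
            · exfalso; apply hgg
              have : g * (g * x) = x := by
                rw [← h2, hu2]; group
              have : g * g * x = 1 * x := by rw [mul_assoc, this, one_mul]
              exact mul_right_cancel this
        · -- v = g x, u = x
          have hu2 : u = x := by rw [hueq, h1]; group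
          left; rw [Prod.mk.injEq]; exact ⟨hu2, h1⟩
    · -- h ∉ {1, g, g⁻¹}
      refine ⟨if h⁻¹ * x ∈ Y then (x, h⁻¹ * x) else (g * x, h⁻¹ * (g * x)),
              if h * x ∈ Y then (h * x, x) else (h * (g * x), g * x), ?_⟩
      rintro u v hu hv hP huv
      have hveq : v = h⁻¹ * u := by rw [← huv]; group
      have hueq : u = h * v := by rw [← huv]; group
      rcases hP with hP | hP
      · rcases mem_pair_iff.1 hP with h1 | h1
        · -- u = x, v = h⁻¹ x
          have hv2 : v = h⁻¹ * x := by rw [hveq, h1]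
          have hvY : v ∈ Y := by
            rcases hv with hv | hv
            · exact hv
            · rcases mem_pair_iff.1 hv with h2 | h2
              · exfalso; apply hh
                have : h⁻¹ * x = 1 * x := by rw [← hv2, h2, one_mul]
                simpa using mul_right_cancel this
              · exfalso; apply hB
                have : h⁻¹ * x = g * x := by rw [← hv2, h2]
                have := mul_right_cancel this
                rw [← this]; group
          left
          rw [if_pos (hv2 ▸ hvY)]
          rw [Prod.mk.injEq]; exact ⟨h1, hv2⟩
        · -- u = g x, v = h⁻¹ (g x)
          have hv2 : v = h⁻¹ * (g * x) := by rw [hveq, h1]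
          have hvY : v ∈ Y := by
            rcases hv with hv | hv
            · exact hv
            · rcases mem_pair_iff.1 hv with h2 | h2
              · exfalso; apply hA
                have : h⁻¹ * (g * x) = x := by rw [← hv2, h2]
                have : h⁻¹ * (g * x) = 1 * x := by rw [this, one_mul]
                have h3 : h⁻¹ * g * x = 1 * x := by rw [mul_assoc]; exact this
                have := mul_right_cancel h3
                calc h = h * (h⁻¹ * g) := by rw [this]; group
                  _ = g := by group
              · exfalso; apply hh
                have : h⁻¹ * (g * x) = 1 * (g * x) := by rw [← hv2, h2, one_mul]
                simpa using mul_right_cancel this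
          have hnY : h⁻¹ * x ∉ Y := by
            intro hmem
            refine noconj hx hmem (hv2 ▸ hvY) ?_
            group
          left
          rw [if_neg hnY, Prod.mk.injEq]; exact ⟨h1, hv2⟩
      · rcases mem_pair_iff.1 hP with h1 | h1
        · -- v = x, u = h x
          have hu2 : u = h * x := by rw [hueq, h1]
          have huY : u ∈ Y := by
            rcases hu with hu | hu
            · exact hu
            · rcases mem_pair_iff.1 hu with h2 | h2
              · exfalso; apply hh
                have : h * x = 1 * x := by rw [← hu2, h2, one_mul]
                exact mul_right_cancel this
              · exfalso; apply hA
                have : h * x = g * x := by rw [← hu2, h2]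
                exact mul_right_cancel this
          right
          rw [if_pos (hu2 ▸ huY), Prod.mk.injEq]; exact ⟨hu2, h1⟩
        · -- v = g x, u = h (g x)
          have hu2 : u = h * (g * x) := by rw [hueq, h1]
          have huY : u ∈ Y := by
            rcases hu with hu | hu
            · exact hu
            · rcases mem_pair_iff.1 hu with h2 | h2
              · exfalso; apply hB
                have h3 : h * g * x = 1 * x := by
                  rw [mul_assoc, ← hu2, h2, one_mul]
                have := mul_right_cancel h3
                calc h = h * g * g⁻¹ := by group
                  _ = g⁻¹ := by rw [this, one_mul]
              · exfalso; apply hh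
                have : h * (g * x) = 1 * (g * x) := by rw [← hu2, h2, one_mul]
                exact mul_right_cancel this
          have hnY : h * x ∉ Y := by
            intro hmem
            refine noconj hx hmem (hu2 ▸ huY) ?_
            group
          right
          rw [if_neg hnY, Prod.mk.injEq]; exact ⟨hu2, h1⟩

end Reps

section Card
open Cardinal

variable {G : Type*} [Group G] [Infinite G]

lemma mk_mul_le' (A B : Set G) : #(A * B : Set G) ≤ #A * #B := by
  rw [← Set.image2_mul]
  exact Cardinal.mk_image2_le

lemma mk_inv_eq (A : Set G) : #(A⁻¹ : Set G) ≤ #A :=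
  (Cardinal.mk_inv A).le

lemma mk_smul_le (a : G) (A : Set G) : #(a • A : Set G) ≤ #A := by
  rw [← Set.image_smul]
  exact Cardinal.mk_image_le

lemma mk_badset_lt {g : G} {Y : Set G} (hY : #Y < #G) : #(BadSet g Y) < #G := by
  have hinf : ℵ₀ ≤ #G := Cardinal.infinite_iff.1 ‹Infinite G›
  have h3 : #(Y * Y⁻¹ * Y : Set G) < #G := by
    have hle : #(Y * Y⁻¹ * Y : Set G) ≤ #Y * #Y * #Y :=
      calc #(Y * Y⁻¹ * Y : Set G) ≤ #(Y * Y⁻¹ : Set G) * #Y := mk_mul_le' _ _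
        _ ≤ (#Y * #(Y⁻¹ : Set G)) * #Y := mul_le_mul' (mk_mul_le' _ _) le_rfl
        _ ≤ #Y * #Y * #Y := mul_le_mul' (mul_le_mul' le_rfl (mk_inv_eq _)) le_rfl
    exact lt_of_le_of_lt hle
      (Cardinal.mul_lt_of_lt hinf (Cardinal.mul_lt_of_lt hinf hY hY) hY)
  have hsm : ∀ (a : G) (A : Set G), #A < #G → #(a • A : Set G) < #G :=
    fun a A hA => lt_of_le_of_lt (mk_smul_le a A) hA
  unfold BadSet
  refine lt_of_le_of_lt (Cardinal.mk_union_le _ _) (Cardinal.add_lt_of_lt hinf ?_ (hsm _ _ h3))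
  refine lt_of_le_of_lt (Cardinal.mk_union_le _ _) (Cardinal.add_lt_of_lt hinf ?_ h3)
  refine lt_of_le_of_lt (Cardinal.mk_union_le _ _) (Cardinal.add_lt_of_lt hinf ?_ (hsm _ _ hY))
  refine lt_of_le_of_lt (Cardinal.mk_union_le _ _) (Cardinal.add_lt_of_lt hinf ?_ (hsm _ _ hY))
  exact lt_of_le_of_lt (Cardinal.mk_union_le _ _) (Cardinal.add_lt_of_lt hinf hY (hsm _ _ hY))

lemma exists_goodPt {g : G} {Y : Set G} (hg : g ≠ 1)
    (hcov : g ∉ Y * Y⁻¹ ∪ Y⁻¹ * Y) (hY : #Y < #G) : ∃ z, GoodPt g Y z := by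
  classical
  have hinf : ℵ₀ ≤ #G := Cardinal.infinite_iff.1 ‹Infinite G›
  have hbad := mk_badset_lt (g := g) hY
  set C : Set G := {c : G | g * c = c * g} with hC
  rcases lt_or_ge (#C) (#G) with hCs | hCl
  · -- centralizer small: the conjugation fibers are small
    set T : Set G := {z : G | z⁻¹ * g * z ∈ Y⁻¹ * Y} with hT
    have hTle : #T ≤ #(Y⁻¹ * Y : Set G) * #C := by
      set pt : G → G := fun q => if hq : ∃ z, z⁻¹ * g * z = q then hq.choose else 1 with hpt
      have key : ∀ z : T, ((z : G)⁻¹ * g * z) ∈ (Y⁻¹ * Y : Set G) ∧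
          (z : G) * (pt ((z : G)⁻¹ * g * z))⁻¹ ∈ C := by
        rintro ⟨z, hz⟩
        refine ⟨hz, ?_⟩
        have hex : ∃ w, w⁻¹ * g * w = z⁻¹ * g * z := ⟨z, rfl⟩
        have hw : (pt (z⁻¹ * g * z))⁻¹ * g * (pt (z⁻¹ * g * z)) = z⁻¹ * g * z := by
          rw [hpt]; simp only [dif_pos hex]; exact hex.choose_spec
        set w := pt (z⁻¹ * g * z)
        simp only [hC, Set.mem_setOf_eq]
        have h1 : g * z = z * (w⁻¹ * g * w) * z⁻¹ * z := by
          rw [hw]; group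
        calc g * (z * w⁻¹) = (g * z) * w⁻¹ := by group
          _ = z * w⁻¹ * g := by rw [h1]; group
      let f : T → (Y⁻¹ * Y : Set G) × C := fun z =>
        (⟨(z : G)⁻¹ * g * z, (key z).1⟩, ⟨(z : G) * (pt ((z : G)⁻¹ * g * z))⁻¹, (key z).2⟩)
      have hf : Function.Injective f := by
        rintro z₁ z₂ hz
        have h1 : (z₁ : G)⁻¹ * g * z₁ = (z₂ : G)⁻¹ * g * z₂ :=
          congrArg (fun p => (p.1 : G)) hz
        have h2 : (z₁ : G) * (pt ((z₁ : G)⁻¹ * g * z₁))⁻¹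
            = (z₂ : G) * (pt ((z₂ : G)⁻¹ * g * z₂))⁻¹ :=
          congrArg (fun p => (p.2 : G)) hz
        rw [h1] at h2
        exact Subtype.ext (mul_right_cancel h2)
      simpa using Cardinal.mk_le_of_injective hf
    have hTlt : #T < #G := by
      refine lt_of_le_of_lt hTle (Cardinal.mul_lt_of_lt hinf ?_ hCs)
      have hle : #(Y⁻¹ * Y : Set G) ≤ #Y * #Y :=
        calc #(Y⁻¹ * Y : Set G) ≤ #(Y⁻¹ : Set G) * #Y := mk_mul_le' _ _
          _ ≤ #Y * #Y := mul_le_mul' (mk_inv_eq _) le_rfl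
      exact lt_of_le_of_lt hle (Cardinal.mul_lt_of_lt hinf hY hY)
    have : ¬ (Set.univ : Set G) ⊆ BadSet g Y ∪ T := by
      intro hsub
      have : #G ≤ #(BadSet g Y ∪ T : Set G) := by
        simpa using Cardinal.mk_le_mk_of_subset hsub
      exact absurd (lt_of_le_of_lt this
        (lt_of_le_of_lt (Cardinal.mk_union_le _ _)
          (Cardinal.add_lt_of_lt hinf hbad hTlt))) (lt_irrefl _)
    rw [Set.not_subset] at this
    obtain ⟨z, -, hz⟩ := this
    rw [Set.mem_union, not_or] at hz
    exact ⟨z, hz.1, fun hmem => hz.2 hmem⟩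
  · -- centralizer big : pick z in C away from BadSet
    have : ¬ C ⊆ BadSet g Y := by
      intro hsub
      exact absurd (lt_of_le_of_lt ((hCl.trans (Cardinal.mk_le_mk_of_subset hsub))) hbad)
        (lt_irrefl _)
    rw [Set.not_subset] at this
    obtain ⟨z, hzC, hz⟩ := this
    refine ⟨z, hz, ?_⟩
    have : z⁻¹ * g * z = g := by
      have := hzC
      simp only [hC, Set.mem_setOf_eq] at this
      rw [mul_assoc, this]; group
    rw [this]
    exact fun hmem => hcov (Or.inr hmem)

end Card

section Rec
open Cardinal

universe u
variable {G : Type u} [Group G] {ι : Type u} [LinearOrder ι] [WellFoundedLT ι]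

noncomputable def pairsF (e : ι → G) : ι → Set G :=
  (wellFounded_lt).fix fun i ih => stepSet (e i) (⋃ j : {j : ι // j < i}, ih j j.2)

noncomputable def below (e : ι → G) (i : ι) : Set G := ⋃ j : {j : ι // j < i}, pairsF e j

noncomputable def XSet (e : ι → G) : Set G := ⋃ i, pairsF e i

lemma pairsF_eq (e : ι → G) (i : ι) : pairsF e i = stepSet (e i) (below e i) := by
  rw [pairsF, WellFounded.fix_eq]
  rfl

lemma pairsF_spec (e : ι → G) (i : ι) :
    pairsF e i = ∅ ∨ ∃ x, GoodPt (e i) (below e i) x ∧ e i ≠ 1 ∧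
      e i ∉ below e i * (below e i)⁻¹ ∪ (below e i)⁻¹ * below e i ∧
      pairsF e i = {x, e i * x} := by
  rw [pairsF_eq]
  exact stepSet_cases _ _

lemma pairsF_subset_below {e : ι → G} {j i : ι} (h : j < i) : pairsF e j ⊆ below e i :=
  Set.subset_iUnion_of_subset (⟨j, h⟩ : {j : ι // j < i}) subset_rfl

lemma below_subset_below {e : ι → G} {j i : ι} (h : j ≤ i) : below e j ⊆ below e i :=
  Set.iUnion_subset fun ⟨k, hk⟩ => pairsF_subset_below (lt_of_lt_of_le hk h)

lemma pairsF_subset_XSet {e : ι → G} (i : ι) : pairsF e i ⊆ XSet e :=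
  Set.subset_iUnion (fun i => pairsF e i) i

lemma below_subset_XSet {e : ι → G} (i : ι) : below e i ⊆ XSet e :=
  Set.iUnion_subset fun ⟨k, _⟩ => pairsF_subset_XSet k

lemma not_mem_below {e : ι → G} {i : ι} {a : G} (ha : a ∈ pairsF e i) :
    a ∉ below e i := by
  rcases pairsF_spec e i with hsp | ⟨x, hx, _, _, hsp⟩
  · rw [hsp] at ha; exact absurd ha (Set.notMem_empty a)
  · rw [hsp] at ha
    rcases mem_pair_iff.1 ha with h | h
    · rw [h]; exact notY hx
    · rw [h]; exact notY₃ hx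

lemma mk_pairsF_le (e : ι → G) (i : ι) : #(pairsF e i) ≤ 2 := by
  rcases pairsF_spec e i with hsp | ⟨x, _, _, _, hsp⟩ <;> rw [hsp]
  · simp
  · calc #({x, e i * x} : Set G) ≤ #({e i * x} : Set G) + 1 := Cardinal.mk_insert_le
      _ ≤ 1 + 1 := by rw [Cardinal.mk_singleton]
      _ = 2 := one_add_one_eq_two

lemma mk_below_le (e : ι → G) (i : ι) : #(below e i) ≤ #{j : ι // j < i} * (2 : Cardinal) := by
  rcases isEmpty_or_nonempty {j : ι // j < i} with hemp | hne
  · have : below e i = ∅ := by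
      rw [below]; exact Set.iUnion_of_empty _
    rw [this]; simp
  · refine (Cardinal.mk_iUnion_le _).trans ?_
    refine mul_le_mul' le_rfl (ciSup_le' fun j => mk_pairsF_le e j)

end Rec

section Glob
open Cardinal

universe v
variable {G : Type v} [Group G] [Infinite G] {ι : Type v} [LinearOrder ι] [WellFoundedLT ι]
variable (e : ι → G)

/-- if a stage is skipped then its element was covered or trivial -/
lemma skipped (Hsm : ∀ i : ι, #(below e i) < #G) (i : ι) (hemp : pairsF e i = ∅) :
    e i = 1 ∨ e i ∈ below e i * (below e i)⁻¹ ∪ (below e i)⁻¹ * below e i := by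
  by_contra hcon
  rw [not_or] at hcon
  have hact : Active (e i) (below e i) :=
    ⟨hcon.1, hcon.2, exists_goodPt hcon.1 hcon.2 (Hsm i)⟩
  obtain ⟨x, -, hstep⟩ := stepSet_of_active hact
  rw [pairsF_eq, hstep] at hemp
  exact (Set.insert_nonempty _ _).ne_empty hemp

lemma global_reps (h : G) (hh : h ≠ 1) :
    ∃ p q : G × G, ∀ u v, u ∈ XSet e → v ∈ XSet e → u * v⁻¹ = h →
      (u, v) = p ∨ (u, v) = q := by
  classical
  -- stages hit by h
  set S : Set ι := {k : ι | ∃ u v, u ∈ below e k ∪ pairsF e k ∧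
    v ∈ below e k ∪ pairsF e k ∧ (u ∈ pairsF e k ∨ v ∈ pairsF e k) ∧ u * v⁻¹ = h} with hS
  -- every representation lives at some stage in S
  have claim1 : ∀ u v, u ∈ XSet e → v ∈ XSet e → u * v⁻¹ = h →
      ∃ k ∈ S, u ∈ below e k ∪ pairsF e k ∧ v ∈ below e k ∪ pairsF e k ∧
        (u ∈ pairsF e k ∨ v ∈ pairsF e k) := by
    intro u v hu hv huv
    obtain ⟨iu, hiu⟩ := Set.mem_iUnion.1 hu
    obtain ⟨iv, hiv⟩ := Set.mem_iUnion.1 hv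
    refine ⟨max iu iv, ?_⟩
    have hu' : u ∈ below e (max iu iv) ∪ pairsF e (max iu iv) := by
      rcases lt_or_eq_of_le (le_max_left iu iv) with hlt | heq
      · exact Or.inl (pairsF_subset_below hlt hiu)
      · rw [← heq]; exact Or.inr hiu
    have hv' : v ∈ below e (max iu iv) ∪ pairsF e (max iu iv) := by
      rcases lt_or_eq_of_le (le_max_right iu iv) with hlt | heq
      · exact Or.inl (pairsF_subset_below hlt hiv)
      · rw [← heq]; exact Or.inr hiv
    have hP : u ∈ pairsF e (max iu iv) ∨ v ∈ pairsF e (max iu iv) := by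
      rcases max_cases iu iv with ⟨hm, -⟩ | ⟨hm, -⟩
      · left; rw [hm]; exact hiu
      · right; rw [hm]; exact hiv
    exact ⟨⟨u, v, hu', hv', hP, huv⟩, hu', hv', hP⟩
  -- S has at most one element
  have claim2 : ∀ k ∈ S, ∀ k' ∈ S, k = k' := by
    intro k hk k' hk'
    by_contra hne
    wlog hlt : k < k' generalizing k k'
    · exact this k' hk' k hk (Ne.symm hne) (lt_of_le_of_ne (not_lt.1 hlt) (Ne.symm hne))
    obtain ⟨u, v, hu, hv, -, huv⟩ := hk
    obtain ⟨u', v', hu', hv', hP', huv'⟩ := hk'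
    -- h is an old quotient at stage k'
    have husub : u ∈ below e k' := by
      rcases hu with hu | hu
      · exact below_subset_below hlt.le hu
      · exact pairsF_subset_below hlt hu
    have hvsub : v ∈ below e k' := by
      rcases hv with hv | hv
      · exact below_subset_below hlt.le hv
      · exact pairsF_subset_below hlt hv
    have hold : h ∈ below e k' * (below e k')⁻¹ := by
      rw [← huv]
      exact Set.mul_mem_mul husub (Set.inv_mem_inv.2 hvsub)
    -- but h is fresh at stage k'
    have hne' : pairsF e k' ≠ ∅ := by
      rcases hP' with hP' | hP' <;> exact fun hc => by rw [hc] at hP'; exact hP'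
    rcases pairsF_spec e k' with hsp | ⟨x, hx, hg1, hcov, hsp⟩
    · exact hne' hsp
    rw [hsp] at hu' hv' hP'
    have huvne : u' ≠ v' := fun hc => hh (by rw [← huv', hc]; group)
    exact (fresh hg1 hcov hx hu' hv' hP' huvne) (huv' ▸ hold)
  by_cases hSn : S.Nonempty
  · obtain ⟨k₀, hk₀⟩ := hSn
    have hne' : pairsF e k₀ ≠ ∅ := by
      obtain ⟨u, v, -, -, hP, -⟩ := hk₀
      rcases hP with hP | hP <;> exact fun hc => by rw [hc] at hP; exact hP
    rcases pairsF_spec e k₀ with hsp | ⟨x, hx, hg1, hcov, hsp⟩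
    · exact absurd hsp hne'
    obtain ⟨p, q, hpq⟩ := stage_reps hg1 hcov hx h hh
    refine ⟨p, q, ?_⟩
    intro u v hu hv huv
    obtain ⟨k, hkS, hu', hv', hP⟩ := claim1 u v hu hv huv
    have hkk : k = k₀ := claim2 k hkS k₀ hk₀
    rw [hkk, hsp] at hu' hv' hP
    exact hpq u v hu' hv' hP huv
  · refine ⟨(1, 1), (1, 1), ?_⟩
    intro u v hu hv huv
    exfalso
    obtain ⟨k, hkS, -⟩ := claim1 u v hu hv huv
    exact hSn ⟨k, hkS⟩

lemma covers (Hsm : ∀ i : ι, #(below e i) < #G) (Hsur : Function.Surjective e) :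
    XSet e * (XSet e)⁻¹ ∪ (XSet e)⁻¹ * XSet e = Set.univ := by
  have hXne : (XSet e).Nonempty := by
    obtain ⟨g₀, hg₀⟩ := exists_ne (1 : G)
    obtain ⟨i₀, rfl⟩ := Hsur g₀
    rcases pairsF_spec e i₀ with hsp | ⟨x, -, -, -, hsp⟩
    · rcases skipped e Hsm i₀ hsp with h1 | h1
      · exact absurd h1 hg₀
      · rcases h1 with h1 | h1
        · obtain ⟨a, ha, -⟩ := h1
          exact ⟨a, below_subset_XSet i₀ ha⟩
        · obtain ⟨a, ha, -⟩ := h1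
          exact ⟨a⁻¹, below_subset_XSet i₀ (Set.mem_inv.1 ha)⟩
    · exact ⟨x, pairsF_subset_XSet i₀ (hsp ▸ Set.mem_insert x _)⟩
  rw [Set.eq_univ_iff_forall]
  intro g
  by_cases hg1 : g = 1
  · obtain ⟨a, ha⟩ := hXne
    refine Or.inl ?_
    rw [hg1, ← mul_inv_cancel a]
    exact Set.mul_mem_mul ha (Set.inv_mem_inv.2 ha)
  · obtain ⟨i, rfl⟩ := Hsur g
    rcases pairsF_spec e i with hsp | ⟨x, -, -, -, hsp⟩
    · rcases skipped e Hsm i hsp with h1 | h1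
      · exact absurd h1 hg1
      · rcases h1 with h1 | h1
        · exact Or.inl (Set.mul_subset_mul (below_subset_XSet i)
            (Set.inv_subset_inv.2 (below_subset_XSet i)) h1)
        · exact Or.inr (Set.mul_subset_mul
            (Set.inv_subset_inv.2 (below_subset_XSet i)) (below_subset_XSet i) h1)
    · refine Or.inl ?_
      have h2 : e i * x ∈ XSet e :=
        pairsF_subset_XSet i (hsp ▸ Set.mem_insert_of_mem _ rfl)
      have h3 : x ∈ XSet e := pairsF_subset_XSet i (hsp ▸ Set.mem_insert x _)
      have : e i = (e i * x) * x⁻¹ := by group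
      rw [this]
      exact Set.mul_mem_mul h2 (Set.inv_mem_inv.2 h3)

end Glob

end TwoThin

namespace TwoThin
open Cardinal in
theorem main {G : Type*} [Group G] [Infinite G] :
    ∃ X : Set G, IsThin 2 X ∧ X * X⁻¹ ∪ X⁻¹ * X = Set.univ := by
  classical
  obtain ⟨e⟩ : Nonempty ((#G).ord.ToType ≃ G) :=
    Cardinal.eq.1 (Cardinal.mk_ord_toType #G)
  set ι := (#G).ord.ToType with hι
  haveI hwo : IsWellOrder ι (· < ·) := isWellOrder_lt
  have Hsm : ∀ i : ι, #(below (⇑e) i) < #G := by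
    intro i
    have h2 := @Ordinal.typein_lt_type ι (· < ·) hwo i
    rw [Ordinal.type_toType] at h2
    have hseg' : #{j : ι // j < i} < #G := by
      rw [← @Ordinal.card_typein ι (· < ·) hwo i]
      exact Cardinal.lt_ord.1 h2
    have hinf : ℵ₀ ≤ #G := Cardinal.infinite_iff.1 ‹Infinite G›
    refine lt_of_le_of_lt (mk_below_le (⇑e) i) ?_
    exact Cardinal.mul_lt_of_lt hinf hseg'
      (lt_of_lt_of_le (by exact_mod_cast Cardinal.nat_lt_aleph0 2) hinf)
  refine ⟨XSet (⇑e), ?_, covers (⇑e) Hsm e.surjective⟩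
  intro g hg
  obtain ⟨p, q, hpq⟩ := global_reps (⇑e) g hg
  have hsub : (g • XSet (⇑e)) ∩ XSet (⇑e) ⊆ {p.1, q.1} := by
    intro u hu
    obtain ⟨hu1, hu2⟩ := hu
    obtain ⟨b, hb, hgb⟩ := hu1
    replace hgb : g * b = u := hgb
    have hrep : u * b⁻¹ = g := by rw [← hgb]; group
    rcases hpq u b hu2 hb hrep with hc | hc
    · exact Set.mem_insert_iff.2 (Or.inl (by rw [← hc]))
    · exact Set.mem_insert_iff.2 (Or.inr (Set.mem_singleton_iff.2 (by rw [← hc])))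
  have hfin : ((g • XSet (⇑e)) ∩ XSet (⇑e)).Finite :=
    Set.Finite.subset ((Set.finite_singleton _).insert _) hsub
  refine ⟨hfin, ?_⟩
  refine le_trans (Set.ncard_le_ncard hsub ((Set.finite_singleton _).insert _)) ?_
  calc ({p.1, q.1} : Set G).ncard ≤ ({q.1} : Set G).ncard + 1 := Set.ncard_insert_le _ _
    _ ≤ 2 := by rw [Set.ncard_singleton]


end TwoThin

theorem exists_two_thin_cover {G : Type*} [Group G] [Infinite G] :
    ∃ X : Set G, IsThin 2 X ∧ X * X⁻¹ ∪ X⁻¹ * X = Set.univ :=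
  TwoThin.main
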